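/- Let δ > 0, γ > 1/δ, 0 ≤ γ' < 1/δ with γ + γ' < 1, and for n > 1 set I(n) = ∫_{1/n}^1 ∫_{1/n}^1 min(1, (min(s,t))^{−γδ} (max(s,t))^{−γ'δ} n^{−δ}) ds dt. Then lim_{n→∞} (−log I(n) / log n) = δ + 1 − γδ. -/

import Mathlib

open Filter MeasureTheory Set

/-- The connection kernel `min(1, (s∧t)^(-a) (s∨t)^(-b) n^(-δ))`. -/
noncomputable def Fker (a b δ n s t : ℝ) : ℝ :=
  min 1 (min s t ^ (-a) * max s t ^ (-b) * n ^ (-δ))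

lemma Fker_le_one (a b δ n s t : ℝ) : Fker a b δ n s t ≤ 1 := min_le_left _ _

lemma Fker_nonneg {a b δ n s t : ℝ} (hn : 0 ≤ n) (hs : 0 ≤ s) (ht : 0 ≤ t) :
    0 ≤ Fker a b δ n s t :=
  le_min zero_le_one (by
    refine mul_nonneg (mul_nonneg ?_ ?_) (Real.rpow_nonneg hn _)
    · exact Real.rpow_nonneg (le_min hs ht) _
    · exact Real.rpow_nonneg (le_max_of_le_left hs) _)

lemma Fker_meas (a b δ n : ℝ) :
    Measurable fun p : ℝ × ℝ => Fker a b δ n p.1 p.2 := by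
  unfold Fker; measurability

lemma Fker_meas_right (a b δ n s : ℝ) : Measurable (Fker a b δ n s) :=
  (Fker_meas a b δ n).comp measurable_prodMk_left

lemma Fker_intOn {a b δ : ℝ} (n s : ℝ) {x y : ℝ} (hn : 0 ≤ n) (hs : 0 ≤ s) (hx : 0 ≤ x) :
    IntegrableOn (Fker a b δ n s) (Icc x y) := by
  refine Integrable.mono' (g := fun _ => 1)
    (integrableOn_const measure_Icc_lt_top.ne)
    (Fker_meas_right a b δ n s).aestronglyMeasurable ?_
  refine (ae_restrict_iff' measurableSet_Icc).2 (ae_of_all _ fun t ht => ?_)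
  rw [Real.norm_eq_abs, abs_of_nonneg (Fker_nonneg hn hs (hx.trans ht.1))]
  exact Fker_le_one _ _ _ _ _ _

lemma rpow_intOn (c : ℝ) {x y : ℝ} (hx : 0 < x) :
    IntegrableOn (fun t : ℝ => t ^ (-c)) (Icc x y) := by
  refine ContinuousOn.integrableOn_Icc fun t ht => ?_
  exact (Real.continuousAt_rpow_const t _ (Or.inl (by nlinarith [ht.1]))).continuousWithinAt

lemma gker_meas (a b δ n : ℝ) (S : Set ℝ) :
    StronglyMeasurable fun s => ∫ t in S, Fker a b δ n s t :=
  (Fker_meas a b δ n).stronglyMeasurable.integral_prod_right'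

lemma gker_intOn {a b δ n : ℝ} (hn : 0 < n) (h1 : 1/n ≤ 1) :
    IntegrableOn (fun s => ∫ t in Icc (1/n) 1, Fker a b δ n s t) (Icc (1/n) 1) := by
  have hinv : 0 < 1/n := by positivity
  refine Integrable.mono' (g := fun _ => 1)
    (integrableOn_const measure_Icc_lt_top.ne)
    (gker_meas a b δ n _).aestronglyMeasurable ?_
  refine (ae_restrict_iff' measurableSet_Icc).2 (ae_of_all _ fun s hs => ?_)
  calc ‖∫ t in Icc (1/n) 1, Fker a b δ n s t‖
      ≤ 1 * (volume (Icc (1/n) 1)).toReal := by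
        refine norm_setIntegral_le_of_norm_le_const measure_Icc_lt_top (fun t ht => ?_)
        rw [Real.norm_eq_abs,
          abs_of_nonneg (Fker_nonneg hn.le (hinv.le.trans hs.1) (hinv.le.trans ht.1))]
        exact Fker_le_one _ _ _ _ _ _
    _ ≤ 1 := by
        rw [one_mul, Real.volume_Icc, ENNReal.toReal_ofReal (by linarith)]
        linarith

/-- Squeeze lemma for the log-exponent. -/
lemma log_squeeze {α c C : ℝ} {f : ℝ → ℝ} (hc : 0 < c)
    (h : ∀ᶠ n in atTop, c * n ^ (-α) ≤ f n ∧ f n ≤ C * n ^ (-α)) :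
    Tendsto (fun n => -Real.log (f n) / Real.log n) atTop (nhds α) := by
  have hC : 0 < C := by
    obtain ⟨n, ⟨h1, h2⟩, hn⟩ := (h.and (eventually_gt_atTop 0)).exists
    have hp : 0 < n ^ (-α) := Real.rpow_pos_of_pos hn _
    nlinarith
  have hz : Tendsto (fun n : ℝ => (Real.log n)⁻¹) atTop (nhds 0) :=
    Real.tendsto_log_atTop.inv_tendsto_atTop
  have h1 : Tendsto (fun n : ℝ => α - Real.log C * (Real.log n)⁻¹) atTop (nhds α) := by
    have := (hz.const_mul (Real.log C)).const_sub α
    simpa using this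
  have h2 : Tendsto (fun n : ℝ => α - Real.log c * (Real.log n)⁻¹) atTop (nhds α) := by
    have := (hz.const_mul (Real.log c)).const_sub α
    simpa using this
  refine tendsto_of_tendsto_of_tendsto_of_le_of_le' h1 h2 ?_ ?_
  · filter_upwards [h, eventually_gt_atTop 1] with n ⟨hl, hu⟩ hn1
    have hn0 : (0:ℝ) < n := by linarith
    have hlg : 0 < Real.log n := Real.log_pos hn1
    have hfp : 0 < f n := lt_of_lt_of_le (by positivity) hl
    have hlog : Real.log (f n) ≤ Real.log C + (-α) * Real.log n := by
      calc Real.log (f n) ≤ Real.log (C * n ^ (-α)) := Real.log_le_log hfp hu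
        _ = Real.log C + (-α) * Real.log n := by
            rw [Real.log_mul (ne_of_gt hC) (ne_of_gt (Real.rpow_pos_of_pos hn0 _)),
              Real.log_rpow hn0]
    have hinv : Real.log n * (Real.log n)⁻¹ = 1 := mul_inv_cancel₀ (ne_of_gt hlg)
    calc α - Real.log C * (Real.log n)⁻¹
        = (α * Real.log n - Real.log C) * (Real.log n)⁻¹ := by
          rw [sub_mul, mul_assoc, hinv]; ring
      _ ≤ -Real.log (f n) * (Real.log n)⁻¹ :=
          mul_le_mul_of_nonneg_right (by linarith) (by positivity)
      _ = -Real.log (f n) / Real.log n := (div_eq_mul_inv _ _).symm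
  · filter_upwards [h, eventually_gt_atTop 1] with n ⟨hl, hu⟩ hn1
    have hn0 : (0:ℝ) < n := by linarith
    have hlg : 0 < Real.log n := Real.log_pos hn1
    have hfp : 0 < f n := lt_of_lt_of_le (by positivity) hl
    have hlog : Real.log c + (-α) * Real.log n ≤ Real.log (f n) := by
      calc Real.log c + (-α) * Real.log n
          = Real.log (c * n ^ (-α)) := by
            rw [Real.log_mul (ne_of_gt hc) (ne_of_gt (Real.rpow_pos_of_pos hn0 _)),
              Real.log_rpow hn0]
        _ ≤ Real.log (f n) := Real.log_le_log (by positivity) hl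
    have hinv : Real.log n * (Real.log n)⁻¹ = 1 := mul_inv_cancel₀ (ne_of_gt hlg)
    calc -Real.log (f n) / Real.log n
        = -Real.log (f n) * (Real.log n)⁻¹ := div_eq_mul_inv _ _
      _ ≤ (α * Real.log n - Real.log c) * (Real.log n)⁻¹ :=
          mul_le_mul_of_nonneg_right (by linarith) (by positivity)
      _ = α - Real.log c * (Real.log n)⁻¹ := by
          rw [sub_mul, mul_assoc, hinv]; ring

lemma deff_lower {a b δ n : ℝ} (ha1 : 1 < a) (hb0 : 0 ≤ b) (haδ : a < δ) (hn : 4 ≤ n) :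
    2 ^ (-a) / 2 * n ^ (-(δ + 1 - a)) ≤
      ∫ s in Icc (1/n) 1, ∫ t in Icc (1/n) 1, Fker a b δ n s t := by
  have hn0 : (0:ℝ) < n := by linarith
  have hn1 : (1:ℝ) ≤ n := by linarith
  have hinv0 : (0:ℝ) < 1/n := by positivity
  have hinv1 : 1/n ≤ 1 := by rw [div_le_one hn0]; linarith
  have h2n : 2/n ≤ 1/2 := by rw [div_le_div_iff₀ hn0 (by norm_num)]; linarith
  have h2n1 : 2/n ≤ 1 := by linarith
  have h12 : 1/n ≤ 2/n := by rw [div_le_div_iff₀ hn0 hn0]; nlinarith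
  set c0 : ℝ := 2 ^ (-a) * n ^ (a - δ) with hc0
  have hc0pos : 0 < c0 := by positivity
  have hc0le1 : c0 ≤ 1 := by
    have h1 : (2:ℝ) ^ (-a) ≤ 1 :=
      Real.rpow_le_one_of_one_le_of_nonpos one_le_two (by linarith)
    have h2 : n ^ (a - δ) ≤ 1 :=
      Real.rpow_le_one_of_one_le_of_nonpos hn1 (by linarith)
    calc c0 ≤ 1 * 1 := mul_le_mul h1 h2 (by positivity) zero_le_one
      _ = 1 := one_mul 1
  have key : ∀ s ∈ Icc (1/n) (2/n), ∀ t ∈ Icc (1/2:ℝ) 1, c0 ≤ Fker a b δ n s t := by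
    intro s hs t ht
    have hs0 : 0 < s := lt_of_lt_of_le hinv0 hs.1
    have hst : s ≤ t := hs.2.trans (h2n.trans ht.1)
    have ht0 : (0:ℝ) < t := by linarith [ht.1]
    have hmin : min s t = s := min_eq_left hst
    have hmax : max s t = t := max_eq_right hst
    refine le_min hc0le1 ?_
    rw [hmin, hmax]
    have h1 : (2/n) ^ (-a) ≤ s ^ (-a) :=
      Real.rpow_le_rpow_of_nonpos hs0 hs.2 (by linarith)
    have h2 : (1:ℝ) ≤ t ^ (-b) := by
      have := Real.rpow_le_rpow_of_nonpos ht0 ht.2 (neg_nonpos.2 hb0)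
      rwa [Real.one_rpow] at this
    have h3 : (2/n) ^ (-a) * 1 * n ^ (-δ) ≤ s ^ (-a) * t ^ (-b) * n ^ (-δ) := by
      have hnd : (0:ℝ) ≤ n ^ (-δ) := Real.rpow_nonneg hn0.le _
      have h4 : (2/n) ^ (-a) * 1 ≤ s ^ (-a) * t ^ (-b) :=
        mul_le_mul h1 h2 zero_le_one (Real.rpow_nonneg hs0.le _)
      exact mul_le_mul_of_nonneg_right h4 hnd
    refine le_trans (le_of_eq ?_) h3
    rw [Real.div_rpow (by norm_num) hn0.le, mul_one, div_eq_mul_inv,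
      ← Real.rpow_neg hn0.le, mul_assoc, ← Real.rpow_add hn0]
    ring_nf
    exact hc0
  have hginner : ∀ s ∈ Icc (1/n) (2/n), c0 * (1/2) ≤ ∫ t in Icc (1/n) 1, Fker a b δ n s t := by
    intro s hs
    have hs0 : 0 < s := lt_of_lt_of_le hinv0 hs.1
    have step1 : ∫ t in Icc (1/2:ℝ) 1, Fker a b δ n s t ≤
        ∫ t in Icc (1/n) 1, Fker a b δ n s t := by
      refine setIntegral_mono_set (Fker_intOn n s hn0.le hs0.le hinv0.le) ?_ ?_
      · refine (ae_restrict_iff' measurableSet_Icc).2 (ae_of_all _ fun t ht => ?_)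
        exact Fker_nonneg hn0.le hs0.le (hinv0.le.trans ht.1)
      · exact HasSubset.Subset.eventuallyLE (Icc_subset_Icc (by linarith) le_rfl)
    have step2 : c0 * (1/2) ≤ ∫ t in Icc (1/2:ℝ) 1, Fker a b δ n s t := by
      have hc : ∫ t in Icc (1/2:ℝ) 1, c0 ≤ ∫ t in Icc (1/2:ℝ) 1, Fker a b δ n s t :=
        setIntegral_mono_on (integrableOn_const measure_Icc_lt_top.ne)
          ((Fker_intOn n s hn0.le hs0.le (by norm_num))) measurableSet_Icc (key s hs)
      rwa [setIntegral_const, Measure.real, Real.volume_Icc, ENNReal.toReal_ofReal (by norm_num),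
        smul_eq_mul, show (1:ℝ) - 1/2 = 1/2 by norm_num, mul_comm] at hc
    linarith
  have houter : c0 * (1/2) * (1/n) ≤
      ∫ s in Icc (1/n) 1, ∫ t in Icc (1/n) 1, Fker a b δ n s t := by
    have step1 : ∫ s in Icc (1/n) (2/n), (fun s => ∫ t in Icc (1/n) 1, Fker a b δ n s t) s ≤
        ∫ s in Icc (1/n) 1, ∫ t in Icc (1/n) 1, Fker a b δ n s t := by
      refine setIntegral_mono_set (gker_intOn hn0 hinv1) ?_ ?_
      · refine (ae_restrict_iff' measurableSet_Icc).2 (ae_of_all _ fun s hs => ?_)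
        refine setIntegral_nonneg measurableSet_Icc fun t ht => ?_
        exact Fker_nonneg hn0.le (hinv0.le.trans hs.1) (hinv0.le.trans ht.1)
      · exact HasSubset.Subset.eventuallyLE (Icc_subset_Icc le_rfl h2n1)
    have step2 : c0 * (1/2) * (1/n) ≤
        ∫ s in Icc (1/n) (2/n), (fun s => ∫ t in Icc (1/n) 1, Fker a b δ n s t) s := by
      have hc : ∫ s in Icc (1/n) (2/n), (c0 * (1/2)) ≤
          ∫ s in Icc (1/n) (2/n), (fun s => ∫ t in Icc (1/n) 1, Fker a b δ n s t) s :=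
        setIntegral_mono_on (integrableOn_const measure_Icc_lt_top.ne)
          ((gker_intOn hn0 hinv1).mono_set (Icc_subset_Icc le_rfl h2n1))
          measurableSet_Icc hginner
      rwa [setIntegral_const, Measure.real, Real.volume_Icc, ENNReal.toReal_ofReal (by linarith),
        smul_eq_mul, show 2/n - 1/n = 1/n by ring, mul_comm] at hc
    linarith
  refine le_trans (le_of_eq ?_) houter
  rw [hc0]
  rw [show -(δ + 1 - a) = (a - δ) + (-1) by ring, Real.rpow_add hn0, Real.rpow_neg_one]
  field_simp

/-- value of `∫ t in Icc (1/n) 1, t ^ (-c)` for `c ≠ 1`. -/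
lemma rpow_integral_Icc {n c : ℝ} (hn : 1 ≤ n) (hc : c ≠ 1) :
    ∫ t in Icc (1/n) 1, t ^ (-c) = (1 - n ^ (c - 1)) / (-c + 1) := by
  have hn0 : (0:ℝ) < n := by linarith
  have hinv0 : (0:ℝ) < 1/n := by positivity
  have hinv1 : 1/n ≤ 1 := by rw [div_le_one hn0]; linarith
  rw [integral_Icc_eq_integral_Ioc, ← intervalIntegral.integral_of_le hinv1,
    integral_rpow (Or.inr ⟨by simpa using hc,
      by rw [Set.uIcc_of_le hinv1]; exact fun h => absurd h.1 (by push_neg; positivity)⟩)]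
  rw [Real.one_rpow, one_div, Real.inv_rpow hn0.le, ← Real.rpow_neg hn0.le]
  ring_nf

lemma deff_upper {a b δ n : ℝ} (ha1 : 1 < a) (hb1 : b < 1) (hn : 4 ≤ n) :
    (∫ s in Icc (1/n) 1, ∫ t in Icc (1/n) 1, Fker a b δ n s t) ≤
      2 / ((a - 1) * (1 - b)) * n ^ (-(δ + 1 - a)) := by
  have hn0 : (0:ℝ) < n := by linarith
  have hn1 : (1:ℝ) ≤ n := by linarith
  have hinv0 : (0:ℝ) < 1/n := by positivity
  have hinv1 : 1/n ≤ 1 := by rw [div_le_one hn0]; linarith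
  set A : ℝ := ∫ t in Icc (1/n) 1, t ^ (-a) with hA
  set B : ℝ := ∫ t in Icc (1/n) 1, t ^ (-b) with hB
  have hA_eq : A = (1 - n ^ (a - 1)) / (-a + 1) := rpow_integral_Icc hn1 (by linarith)
  have hB_eq : B = (1 - n ^ (b - 1)) / (-b + 1) := rpow_integral_Icc hn1 (by linarith)
  have hna1 : (1:ℝ) ≤ n ^ (a - 1) := Real.one_le_rpow hn1 (by linarith)
  have hnb1 : n ^ (b - 1) ≤ 1 := Real.rpow_le_one_of_one_le_of_nonpos hn1 (by linarith)
  have hnb0 : (0:ℝ) ≤ n ^ (b - 1) := Real.rpow_nonneg hn0.le _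
  have hA_eq' : A = (n ^ (a - 1) - 1) / (a - 1) := by
    rw [hA_eq, div_eq_div_iff (by linarith) (by linarith : (a:ℝ) - 1 ≠ 0)]; ring
  have hA_nonneg : 0 ≤ A := by
    rw [hA_eq']; apply div_nonneg <;> linarith
  have hA_le : A ≤ n ^ (a - 1) / (a - 1) := by
    rw [hA_eq', div_le_div_iff₀ (by linarith) (by linarith)]; nlinarith
  have hB_nonneg : 0 ≤ B := by
    rw [hB_eq]; apply div_nonneg <;> linarith
  have hB_le : B ≤ 1 / (1 - b) := by
    rw [hB_eq, div_le_div_iff₀ (by linarith) (by linarith)]; nlinarith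
  have hinner : ∀ s ∈ Icc (1/n) 1, (∫ t in Icc (1/n) 1, Fker a b δ n s t) ≤
      (n ^ (-δ) * B) * s ^ (-a) + (n ^ (-δ) * A) * s ^ (-b) := by
    intro s hs
    have hs0 : 0 < s := lt_of_lt_of_le hinv0 hs.1
    have step : (∫ t in Icc (1/n) 1, Fker a b δ n s t) ≤
        ∫ t in Icc (1/n) 1,
          ((n ^ (-δ) * s ^ (-a)) * t ^ (-b) + (n ^ (-δ) * s ^ (-b)) * t ^ (-a)) := by
      refine setIntegral_mono_on (Fker_intOn n s hn0.le hs0.le hinv0.le)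
        (((rpow_intOn b hinv0).const_mul _).add ((rpow_intOn a hinv0).const_mul _))
        measurableSet_Icc fun t ht => ?_
      have ht0 : 0 < t := lt_of_lt_of_le hinv0 ht.1
      have hnd : (0:ℝ) ≤ n ^ (-δ) := Real.rpow_nonneg hn0.le _
      refine le_trans (min_le_right _ _) ?_
      rcases le_total s t with h | h
      · rw [min_eq_left h, max_eq_right h]
        have h2 : 0 ≤ (n ^ (-δ) * s ^ (-b)) * t ^ (-a) := by positivity
        nlinarith [Real.rpow_nonneg hs0.le (-a), Real.rpow_nonneg ht0.le (-b)]
      · rw [min_eq_right h, max_eq_left h]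
        have h2 : 0 ≤ (n ^ (-δ) * s ^ (-a)) * t ^ (-b) := by positivity
        nlinarith [Real.rpow_nonneg hs0.le (-b), Real.rpow_nonneg ht0.le (-a)]
    rw [integral_add ((rpow_intOn b hinv0).const_mul _) ((rpow_intOn a hinv0).const_mul _),
      integral_const_mul, integral_const_mul] at step
    calc (∫ t in Icc (1/n) 1, Fker a b δ n s t)
        ≤ n ^ (-δ) * s ^ (-a) * B + n ^ (-δ) * s ^ (-b) * A := step
      _ = (n ^ (-δ) * B) * s ^ (-a) + (n ^ (-δ) * A) * s ^ (-b) := by ring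
  have houter : (∫ s in Icc (1/n) 1, ∫ t in Icc (1/n) 1, Fker a b δ n s t) ≤
      (n ^ (-δ) * B) * A + (n ^ (-δ) * A) * B := by
    have step : (∫ s in Icc (1/n) 1, ∫ t in Icc (1/n) 1, Fker a b δ n s t) ≤
        ∫ s in Icc (1/n) 1, ((n ^ (-δ) * B) * s ^ (-a) + (n ^ (-δ) * A) * s ^ (-b)) :=
      setIntegral_mono_on (gker_intOn hn0 hinv1)
        (((rpow_intOn a hinv0).const_mul _).add ((rpow_intOn b hinv0).const_mul _))
        measurableSet_Icc hinner
    rwa [integral_add ((rpow_intOn a hinv0).const_mul _) ((rpow_intOn b hinv0).const_mul _),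
      integral_const_mul, integral_const_mul] at step
  have hfin : (n ^ (-δ) * B) * A + (n ^ (-δ) * A) * B ≤
      2 / ((a - 1) * (1 - b)) * n ^ (-(δ + 1 - a)) := by
    have hnd : (0:ℝ) ≤ n ^ (-δ) := Real.rpow_nonneg hn0.le _
    have h1 : (n ^ (-δ) * B) * A + (n ^ (-δ) * A) * B = 2 * n ^ (-δ) * A * B := by ring
    rw [h1]
    have h2 : 2 * n ^ (-δ) * A * B ≤ 2 * n ^ (-δ) * (n ^ (a-1)/(a-1)) * (1/(1-b)) := by
      have := mul_le_mul (mul_le_mul (le_refl (2 * n ^ (-δ))) hA_le hA_nonneg (by positivity))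
        hB_le hB_nonneg
        (mul_nonneg (by positivity) (div_nonneg (Real.rpow_nonneg hn0.le _) (by linarith)))
      linarith
    refine h2.trans (le_of_eq ?_)
    rw [show -(δ + 1 - a) = (-δ) + (a - 1) by ring, Real.rpow_add hn0]
    field_simp
  exact houter.trans hfin

/-- Effective decay exponent of the weight-dependent random connection model with
interpolation kernel and long-range profile: in the regime `γ > 1/δ > γ'`,
`γ + γ' < 1`, one has `δ_eff = δ + 1 - γδ`, i.e. `-log I(n) / log n → δ + 1 - γδ`
for `I(n) = ∫∫_{[1/n,1]²} min(1, (s∧t)^(-γδ)(s∨t)^(-γ'δ) n^(-δ)) ds dt`. -/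
theorem deff_kernel_large_gamma (δ γ γ' : ℝ) (hδ : 0 < δ)
    (hγ : 1 / δ < γ) (hγ'0 : 0 ≤ γ') (hγ' : γ' < 1 / δ)
    (hsum : γ + γ' < 1) :
    Tendsto (fun n : ℝ =>
      -Real.log (∫ s in Set.Icc (1 / n) 1, ∫ t in Set.Icc (1 / n) 1,
          min 1 ((min s t) ^ (-(γ * δ)) * (max s t) ^ (-(γ' * δ)) * n ^ (-δ)))
        / Real.log n) atTop (nhds (δ + 1 - γ * δ)) := by
  have ha1 : 1 < γ * δ := by rw [div_lt_iff₀ hδ] at hγ; linarith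
  have hb1 : γ' * δ < 1 := by rw [← div_lt_iff₀ hδ] at *; linarith [(lt_div_iff₀ hδ).mp hγ']
  have hb0 : 0 ≤ γ' * δ := mul_nonneg hγ'0 hδ.le
  have hγ1 : γ < 1 := by linarith
  have haδ : γ * δ < δ := by nlinarith
  have key := log_squeeze (α := δ + 1 - γ * δ) (c := 2 ^ (-(γ * δ)) / 2)
    (C := 2 / ((γ * δ - 1) * (1 - γ' * δ)))
    (f := fun n : ℝ => ∫ s in Icc (1/n) 1, ∫ t in Icc (1/n) 1, Fker (γ*δ) (γ'*δ) δ n s t)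
    (by positivity) ?_
  · exact key
  · filter_upwards [eventually_ge_atTop 4] with n hn
    exact ⟨deff_lower ha1 hb0 haδ hn, deff_upper ha1 hb1 hn⟩
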